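/- Let ι be a nonempty finite index set and let (μ_i)_{i ∈ ι} be a family of probability measures on a standard Borel space Ω. Then there exists a probability measure Γ on the product space Ω^{ι} (with the product σ-algebra) such that for every i ∈ ι the i-th coordinate marginal of Γ equals μ_i, and for every pair i, j ∈ ι, Γ({ω ∈ Ω^{ι} : ω(i) ≠ ω(j)}) ≤ 2·d_TV(μ_i, μ_j) / (1 + d_TV(μ_i, μ_j)), where d_TV(μ, ν) = sup over measurable S of |μ(S) − ν(S)| denotes the total variation distance. -/

import Mathlib

open MeasureTheory

/-- The total variation distance `sup_S |μ(S) - ν(S)|` between two measures. -/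
noncomputable def tvDist {Ω : Type*} [MeasurableSpace Ω] (μ ν : Measure Ω) : ℝ :=
  ⨆ S : {S : Set Ω // MeasurableSet S}, |(μ S.1).toReal - (ν S.1).toReal|

namespace POC

open ENNReal Set

variable {ι Ω : Type*} [Fintype ι] [MeasurableSpace Ω]

/-- The (unnormalized) sum of the family. -/
noncomputable def sig (μ : ι → Measure Ω) : Measure Ω := ∑ i, μ i

/-- Densities w.r.t. the sum. -/
noncomputable def g (μ : ι → Measure Ω) (i : ι) : Ω → ℝ≥0∞ := (μ i).rnDeriv (sig μ)

/-- The normalized reference measure. -/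
noncomputable def rho (μ : ι → Measure Ω) : Measure Ω :=
  ((Fintype.card ι : ℝ≥0∞))⁻¹ • sig μ

/-- Base randomness for one rejection round: a point and a uniform variable. -/
noncomputable def kap (μ : ι → Measure Ω) : Measure (Ω × ℝ) :=
  (rho μ).prod (volume.restrict (Set.Icc (0:ℝ) 1))

/-- Index `i` accepts the draw `w`. -/
def Acc (μ : ι → Measure Ω) (i : ι) : Set (Ω × ℝ) :=
  {w | ENNReal.ofReal w.2 < g μ i w.1}

open Classical in
/-- The set of indices in `S` accepting `w`. -/
noncomputable def accSet (μ : ι → Measure Ω) (S : Finset ι) (w : Ω × ℝ) : Finset ι :=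
  S.filter (fun i => w ∈ Acc μ i)

/-- The event that the accepted subset of `S` is exactly `T`. -/
def piece (μ : ι → Measure Ω) (S T : Finset ι) : Set (Ω × ℝ) :=
  ⋂ i ∈ S, {w | w ∈ Acc μ i ↔ i ∈ T}

/-- The event that some index in `S` accepts. -/
def ES (μ : ι → Measure Ω) (S : Finset ι) : Set (Ω × ℝ) := ⋃ i ∈ S, Acc μ i

open Classical in
/-- Paste the accepted value into the coordinates of `T`. -/
noncomputable def paste (T : Finset ι) : (Ω × ℝ) × (ι → Ω) → (ι → Ω) :=
  fun p i => if i ∈ T then p.1.1 else p.2 i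

open Classical in
/-- The recursively defined coupling measure, with fuel `k`. -/
noncomputable def gamAux (μ : ι → Measure Ω) : ℕ → Finset ι → Measure (ι → Ω)
  | 0, _ => if h : Nonempty Ω then Measure.dirac (fun _ => h.some) else 0
  | (k+1), S =>
    if S = ∅ then (if h : Nonempty Ω then Measure.dirac (fun _ => h.some) else 0) else
      (kap μ (ES μ S))⁻¹ •
        ∑ T ∈ S.powerset.filter (· ≠ ∅),
          (((kap μ).restrict (piece μ S T)).prod (gamAux μ k (S \ T))).map (paste T)

section Lemmas

variable {μ : ι → Measure Ω} (hprob : ∀ i, IsProbabilityMeasure (μ i))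

lemma sig_fin (hprob : ∀ i, IsProbabilityMeasure (μ i)) : IsFiniteMeasure (sig (μ := μ)) := by
  constructor
  simp only [sig, Measure.finset_sum_apply]
  exact ENNReal.sum_lt_top.2 fun i _ => by
    rw [(hprob i).measure_univ]; exact one_lt_top

lemma mu_le_sig (i : ι) : μ i ≤ sig μ := by
  refine Measure.le_intro fun s hs _ => ?_
  rw [sig, Measure.finset_sum_apply]
  exact Finset.single_le_sum (f := fun j => μ j s) (fun j _ => zero_le) (Finset.mem_univ i)

lemma mu_ac (i : ι) : μ i ≪ sig μ :=
  Measure.absolutelyContinuous_of_le (mu_le_sig i)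

lemma g_meas (i : ι) : Measurable (g μ i) := Measure.measurable_rnDeriv _ _

lemma setLIntegral_g (hprob : ∀ i, IsProbabilityMeasure (μ i)) (i : ι) {s : Set Ω}
    (_hs : MeasurableSet s) :
    ∫⁻ z in s, g μ i z ∂(sig μ) = μ i s := by
  haveI := sig_fin hprob
  haveI := hprob i
  exact Measure.setLIntegral_rnDeriv (mu_ac i) s

lemma g_le_one (hprob : ∀ i, IsProbabilityMeasure (μ i)) (i : ι) : g μ i ≤ᵐ[sig μ] 1 := by
  haveI := sig_fin hprob
  exact Measure.rnDeriv_le_one_of_le (mu_le_sig i)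

lemma lintegral_g (hprob : ∀ i, IsProbabilityMeasure (μ i)) (i : ι) :
    ∫⁻ z, g μ i z ∂(sig μ) = μ i Set.univ := by
  rw [← setLIntegral_univ, setLIntegral_g hprob i MeasurableSet.univ]

lemma acc_meas (i : ι) : MeasurableSet (Acc μ i) :=
  measurableSet_lt (ENNReal.measurable_ofReal.comp measurable_snd)
    ((g_meas i).comp measurable_fst)

lemma piece_meas (S T : Finset ι) : MeasurableSet (piece μ S T) := by
  classical
  refine Finset.measurableSet_biInter S fun i _ => ?_
  by_cases hi : i ∈ T
  · simp only [hi, iff_true]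
    exact acc_meas i
  · simp only [hi, iff_false]
    exact (acc_meas i).compl

lemma es_meas (S : Finset ι) : MeasurableSet (ES μ S) :=
  Finset.measurableSet_biUnion S fun i _ => acc_meas i

lemma paste_meas (T : Finset ι) : Measurable (paste (Ω := Ω) T) := by
  refine measurable_pi_lambda _ fun i => ?_
  unfold paste
  by_cases hi : i ∈ T
  · simpa [hi] using (measurable_fst.fst : Measurable fun p : (Ω × ℝ) × (ι → Ω) => p.1.1)
  · simp only [hi, if_false]
    exact (measurable_pi_apply i).comp measurable_snd

variable [Nonempty ι]

lemma rho_prob (hprob : ∀ i, IsProbabilityMeasure (μ i)) :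
    IsProbabilityMeasure (rho μ) := by
  constructor
  simp only [rho, Measure.smul_apply, smul_eq_mul, sig, Measure.finset_sum_apply]
  simp only [measure_univ, Finset.sum_const, Finset.card_univ, nsmul_eq_mul, mul_one]
  rw [ENNReal.inv_mul_cancel]
  · exact Nat.cast_ne_zero.2 Fintype.card_ne_zero
  · exact ENNReal.natCast_ne_top _

lemma leb01_prob : IsProbabilityMeasure (volume.restrict (Set.Icc (0:ℝ) 1)) := by
  constructor
  rw [Measure.restrict_apply_univ, Real.volume_Icc]
  norm_num

lemma kap_prob (hprob : ∀ i, IsProbabilityMeasure (μ i)) :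
    IsProbabilityMeasure (kap μ) := by
  haveI := rho_prob hprob
  haveI := leb01_prob
  unfold kap
  infer_instance

/-- The uniform measure of `{u | ofReal u < a}`. -/
lemma unif_lt (a : ℝ≥0∞) :
    (volume.restrict (Set.Icc (0:ℝ) 1)) {u | ENNReal.ofReal u < a} = min a 1 := by
  rw [Measure.restrict_apply' measurableSet_Icc]
  rcases le_or_gt a 1 with h1 | h1
  · have ha : a ≠ ⊤ := (h1.trans_lt one_lt_top).ne
    have hset : {u : ℝ | ENNReal.ofReal u < a} ∩ Set.Icc (0:ℝ) 1 = Set.Ico 0 a.toReal := by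
      ext u
      simp only [Set.mem_inter_iff, Set.mem_setOf_eq, Set.mem_Icc, Set.mem_Ico]
      constructor
      · rintro ⟨hu, h0, _⟩
        exact ⟨h0, (ENNReal.ofReal_lt_iff_lt_toReal h0 ha).1 hu⟩
      · rintro ⟨h0, hu⟩
        have hle : a.toReal ≤ 1 := by
          simpa using ENNReal.toReal_mono one_ne_top h1
        exact ⟨(ENNReal.ofReal_lt_iff_lt_toReal h0 ha).2 hu, h0,
          le_of_lt (lt_of_lt_of_le hu hle)⟩
    rw [hset, Real.volume_Ico, sub_zero, ENNReal.ofReal_toReal ha, min_eq_left h1]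
  · have hset : {u : ℝ | ENNReal.ofReal u < a} ∩ Set.Icc (0:ℝ) 1 = Set.Icc (0:ℝ) 1 := by
      refine Set.inter_eq_right.2 fun u hu => ?_
      have : ENNReal.ofReal u ≤ 1 := by
        rw [← ENNReal.ofReal_one]
        exact ENNReal.ofReal_le_ofReal hu.2
      exact lt_of_le_of_lt this h1
    rw [hset, Real.volume_Icc, min_eq_right h1.le]
    norm_num

/-- Key computation of `kap` of a sublevel event intersected with a vertical set. -/
lemma kap_inter (hprob : ∀ i, IsProbabilityMeasure (μ i))
    {φ : Ω → ℝ≥0∞} (hφ : Measurable φ) {s : Set Ω} (hs : MeasurableSet s) :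
    kap μ ({w : Ω × ℝ | ENNReal.ofReal w.2 < φ w.1} ∩ (Prod.fst ⁻¹' s)) =
      ((Fintype.card ι : ℝ≥0∞))⁻¹ * ∫⁻ z in s, min (φ z) 1 ∂(sig μ) := by
  have hAmeas : MeasurableSet ({w : Ω × ℝ | ENNReal.ofReal w.2 < φ w.1} ∩ (Prod.fst ⁻¹' s)) :=
    (measurableSet_lt (ENNReal.measurable_ofReal.comp measurable_snd)
      (hφ.comp measurable_fst)).inter (measurable_fst hs)
  rw [kap, Measure.prod_apply hAmeas]
  have hsec : ∀ z : Ω, (volume.restrict (Set.Icc (0:ℝ) 1))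
      (Prod.mk z ⁻¹' ({w : Ω × ℝ | ENNReal.ofReal w.2 < φ w.1} ∩ (Prod.fst ⁻¹' s))) =
      s.indicator (fun z => min (φ z) 1) z := by
    intro z
    by_cases hz : z ∈ s
    · have : Prod.mk z ⁻¹' ({w : Ω × ℝ | ENNReal.ofReal w.2 < φ w.1} ∩ (Prod.fst ⁻¹' s)) =
          {u : ℝ | ENNReal.ofReal u < φ z} := by
        ext u; simp [hz]
      rw [this, unif_lt, Set.indicator_of_mem hz]
    · have : Prod.mk z ⁻¹' ({w : Ω × ℝ | ENNReal.ofReal w.2 < φ w.1} ∩ (Prod.fst ⁻¹' s)) =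
          (∅ : Set ℝ) := by
        ext u; simp [hz]
      rw [this, measure_empty, Set.indicator_of_notMem hz]
  rw [lintegral_congr hsec, lintegral_indicator hs _]
  rw [rho, Measure.restrict_smul, lintegral_smul_measure, smul_eq_mul]

lemma kap_acc_inter (hprob : ∀ i, IsProbabilityMeasure (μ i)) (i : ι)
    {s : Set Ω} (hs : MeasurableSet s) :
    kap μ (Acc μ i ∩ (Prod.fst ⁻¹' s)) = ((Fintype.card ι : ℝ≥0∞))⁻¹ * μ i s := by
  have : Acc μ i = {w : Ω × ℝ | ENNReal.ofReal w.2 < g μ i w.1} := rfl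
  rw [this, kap_inter hprob (g_meas i) hs]
  congr 1
  rw [← setLIntegral_g hprob i hs]
  refine lintegral_congr_ae ?_
  filter_upwards [ae_restrict_of_ae (g_le_one hprob i)] with z hz
  exact min_eq_left hz

lemma kap_acc (hprob : ∀ i, IsProbabilityMeasure (μ i)) (i : ι) :
    kap μ (Acc μ i) = ((Fintype.card ι : ℝ≥0∞))⁻¹ := by
  have := kap_acc_inter hprob i MeasurableSet.univ
  simpa [(hprob i).measure_univ] using this

/-- Membership in a piece. -/
lemma mem_piece {S T : Finset ι} (hT : T ⊆ S) (w : Ω × ℝ) :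
    w ∈ piece μ S T ↔ accSet μ S w = T := by
  classical
  simp only [piece, Set.mem_iInter, Set.mem_setOf_eq, accSet]
  constructor
  · intro h
    ext i
    simp only [Finset.mem_filter]
    constructor
    · rintro ⟨hiS, hacc⟩
      exact (h i hiS).1 hacc
    · intro hiT
      exact ⟨hT hiT, (h i (hT hiT)).2 hiT⟩
  · intro h i hiS
    constructor
    · intro hacc
      rw [← h]
      simp [Finset.mem_filter, hiS, hacc]
    · intro hiT
      have : i ∈ S.filter (fun i => w ∈ Acc μ i) := by rw [h]; exact hiT
      exact (Finset.mem_filter.1 this).2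

/-- Summing `kap` over pieces. -/
lemma sum_kap_piece (hprob : ∀ i, IsProbabilityMeasure (μ i)) (S : Finset ι)
    (P : Finset ι → Prop) [DecidablePred P] {X : Set (Ω × ℝ)} (hX : MeasurableSet X) :
    ∑ T ∈ S.powerset.filter P, kap μ (piece μ S T ∩ X) =
      kap μ ({w | P (accSet μ S w)} ∩ X) := by
  classical
  have hdisj : (S.powerset.filter P : Set (Finset ι)).PairwiseDisjoint
      (fun T => piece μ S T ∩ X) := by
    intro T hT T' hT' hne
    simp only [Finset.coe_filter, Set.mem_setOf_eq, Finset.mem_powerset] at hT hT'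
    refine Set.disjoint_left.2 fun w hw hw' => hne ?_
    have h1 := (mem_piece hT.1 w).1 hw.1
    have h2 := (mem_piece hT'.1 w).1 hw'.1
    rw [← h1, ← h2]
  have hunion : (⋃ T ∈ S.powerset.filter P, (piece μ S T ∩ X)) =
      {w | P (accSet μ S w)} ∩ X := by
    ext w
    simp only [Set.mem_iUnion, Finset.mem_filter, Finset.mem_powerset, Set.mem_inter_iff,
      Set.mem_setOf_eq]
    constructor
    · rintro ⟨T, ⟨hTS, hPT⟩, hw, hX⟩
      rw [← (mem_piece hTS w).1 hw] at hPT
      exact ⟨hPT, hX⟩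
    · rintro ⟨hP, hX⟩
      refine ⟨accSet μ S w, ⟨?_, hP⟩, (mem_piece ?_ w).2 rfl, hX⟩ <;>
        exact Finset.filter_subset _ _
  rw [← hunion]
  rw [measure_biUnion_finset hdisj fun T hT => ?_]
  exact (piece_meas S T).inter hX

lemma mem_accSet {S : Finset ι} {i : ι} {w : Ω × ℝ} :
    i ∈ accSet μ S w ↔ i ∈ S ∧ w ∈ Acc μ i := by
  classical
  simp [accSet]

lemma accSet_ne_empty {S : Finset ι} {w : Ω × ℝ} :
    accSet μ S w ≠ ∅ ↔ w ∈ ES μ S := by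
  classical
  simp only [ne_eq, ← Finset.nonempty_iff_ne_empty, Finset.Nonempty, mem_accSet, ES,
    Set.mem_iUnion]
  tauto

lemma kap_es_ne_zero (hprob : ∀ i, IsProbabilityMeasure (μ i)) {S : Finset ι}
    (hS : S.Nonempty) : kap μ (ES μ S) ≠ 0 := by
  obtain ⟨i, hi⟩ := hS
  have h1 : kap μ (Acc μ i) ≤ kap μ (ES μ S) :=
    measure_mono (Set.subset_biUnion_of_mem hi)
  rw [kap_acc hprob i] at h1
  intro h
  rw [h] at h1
  simp only [le_zero_iff, ENNReal.inv_eq_zero] at h1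
  exact ENNReal.natCast_ne_top _ h1

lemma kap_es_ne_top (hprob : ∀ i, IsProbabilityMeasure (μ i)) (S : Finset ι) :
    kap μ (ES μ S) ≠ ⊤ := by
  haveI := kap_prob hprob
  exact (measure_lt_top _ _).ne

/-- The recursive measure is a probability measure. -/
lemma gamAux_prob (hprob : ∀ i, IsProbabilityMeasure (μ i)) (hΩ : Nonempty Ω) :
    ∀ k, ∀ S : Finset ι, S.card ≤ k → IsProbabilityMeasure (gamAux μ k S) := by
  classical
  intro k
  induction k with
  | zero =>
    intro S _
    simp only [gamAux, dif_pos hΩ]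
    infer_instance
  | succ k ih =>
    intro S hcard
    by_cases hS : S = ∅
    · simp only [gamAux, hS, if_pos, dif_pos hΩ]
      infer_instance
    · haveI := kap_prob hprob
      have hc0 := kap_es_ne_zero hprob (Finset.nonempty_of_ne_empty hS)
      have hc1 := kap_es_ne_top hprob S
      constructor
      rw [show gamAux μ (k+1) S = (kap μ (ES μ S))⁻¹ •
          ∑ T ∈ S.powerset.filter (· ≠ ∅),
            (((kap μ).restrict (piece μ S T)).prod (gamAux μ k (S \ T))).map (paste T) by
        simp [gamAux, hS]]
      rw [Measure.smul_apply, Measure.finset_sum_apply, smul_eq_mul]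
      have hterm : ∀ T ∈ S.powerset.filter (· ≠ ∅),
          ((((kap μ).restrict (piece μ S T)).prod (gamAux μ k (S \ T))).map (paste T))
            Set.univ = kap μ (piece μ S T) := by
        intro T hT
        simp only [Finset.mem_filter, Finset.mem_powerset] at hT
        have hTcard : (S \ T).card ≤ k := by
          have : (S \ T).card < S.card := Finset.card_lt_card
            (Finset.sdiff_ssubset hT.1 (Finset.nonempty_of_ne_empty hT.2))
          omega
        haveI := ih (S \ T) hTcard
        rw [Measure.map_apply (paste_meas T) MeasurableSet.univ, Set.preimage_univ,
          ← Set.univ_prod_univ, Measure.prod_prod, Measure.restrict_apply_univ,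
          measure_univ, mul_one]
      rw [Finset.sum_congr rfl hterm]
      have := sum_kap_piece hprob S (fun T => T ≠ ∅) (MeasurableSet.univ (α := Ω × ℝ))
      simp only [Set.inter_univ] at this
      rw [this]
      have hset : {w : Ω × ℝ | accSet μ S w ≠ ∅} = ES μ S := by
        ext w; exact accSet_ne_empty
      rw [hset, ENNReal.inv_mul_cancel hc0 hc1]

/-- The recursive measure has the right marginals. -/
lemma gamAux_marginal (hprob : ∀ i, IsProbabilityMeasure (μ i)) (hΩ : Nonempty Ω) :
    ∀ k, ∀ S : Finset ι, S.card ≤ k → ∀ i ∈ S,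
      (gamAux μ k S).map (fun ω => ω i) = μ i := by
  classical
  intro k
  induction k with
  | zero =>
    intro S hcard i hi
    rw [Finset.card_eq_zero.1 (Nat.le_zero.1 hcard)] at hi
    exact absurd hi (Finset.notMem_empty i)
  | succ k ih =>
    intro S hcard i hi
    have hS : S ≠ ∅ := Finset.ne_empty_of_mem hi
    haveI := kap_prob hprob
    have hc0 := kap_es_ne_zero hprob (Finset.nonempty_of_ne_empty hS)
    have hc1 := kap_es_ne_top hprob S
    have hgam : gamAux μ (k+1) S = (kap μ (ES μ S))⁻¹ •
        ∑ T ∈ S.powerset.filter (· ≠ ∅),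
          (((kap μ).restrict (piece μ S T)).prod (gamAux μ k (S \ T))).map (paste T) := by
      simp [gamAux, hS]
    refine Measure.ext fun s hs => ?_
    rw [Measure.map_apply (measurable_pi_apply i) hs, hgam, Measure.smul_apply,
      Measure.finset_sum_apply, smul_eq_mul]
    set f : Finset ι → ℝ≥0∞ := fun T =>
      ((((kap μ).restrict (piece μ S T)).prod (gamAux μ k (S \ T))).map (paste T))
        ((fun ω : ι → Ω => ω i) ⁻¹' s) with hf
    have hcardT : ∀ T ∈ S.powerset.filter (· ≠ ∅), (S \ T).card ≤ k := by
      intro T hT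
      simp only [Finset.mem_filter, Finset.mem_powerset] at hT
      have : (S \ T).card < S.card := Finset.card_lt_card
        (Finset.sdiff_ssubset hT.1 (Finset.nonempty_of_ne_empty hT.2))
      omega
    have hterm1 : ∀ T ∈ S.powerset.filter (· ≠ ∅), i ∈ T →
        f T = kap μ (piece μ S T ∩ (Prod.fst ⁻¹' s)) := by
      intro T hT hiT
      haveI := gamAux_prob hprob hΩ k (S \ T) (hcardT T hT)
      have hpre : paste T ⁻¹' ((fun ω : ι → Ω => ω i) ⁻¹' s) =
          ((Prod.fst ⁻¹' s) : Set (Ω × ℝ)) ×ˢ (Set.univ : Set (ι → Ω)) := by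
        ext p
        simp [paste, hiT]
      rw [hf]
      simp only
      rw [Measure.map_apply (paste_meas T) ((measurable_pi_apply i) hs), hpre,
        Measure.prod_prod, measure_univ, mul_one,
        Measure.restrict_apply (measurable_fst hs), Set.inter_comm]
    have hterm2 : ∀ T ∈ S.powerset.filter (· ≠ ∅), i ∉ T →
        f T = kap μ (piece μ S T) * μ i s := by
      intro T hT hiT
      haveI := gamAux_prob hprob hΩ k (S \ T) (hcardT T hT)
      have hiST : i ∈ S \ T := Finset.mem_sdiff.2 ⟨hi, hiT⟩
      have hpre : paste T ⁻¹' ((fun ω : ι → Ω => ω i) ⁻¹' s) =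
          (Set.univ : Set (Ω × ℝ)) ×ˢ ((fun ω : ι → Ω => ω i) ⁻¹' s) := by
        ext p
        simp [paste, hiT]
      rw [hf]
      simp only
      rw [Measure.map_apply (paste_meas T) ((measurable_pi_apply i) hs), hpre,
        Measure.prod_prod, Measure.restrict_apply_univ,
        ← Measure.map_apply (measurable_pi_apply i) hs,
        ih (S \ T) (hcardT T hT) i hiST]
    rw [← Finset.sum_filter_add_sum_filter_not (S.powerset.filter (· ≠ ∅)) (fun T => i ∈ T) f]
    have e1 : ∑ T ∈ (S.powerset.filter (· ≠ ∅)).filter (fun T => i ∈ T), f T =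
        ((Fintype.card ι : ℝ≥0∞))⁻¹ * μ i s := by
      rw [Finset.sum_congr rfl (fun T hT => hterm1 T (Finset.mem_of_mem_filter T hT)
        (Finset.mem_filter.1 hT).2)]
      rw [Finset.filter_filter, sum_kap_piece hprob S _ (measurable_fst hs)]
      have hset : {w : Ω × ℝ | accSet μ S w ≠ ∅ ∧ i ∈ accSet μ S w} = Acc μ i := by
        ext w
        simp only [Set.mem_setOf_eq, mem_accSet]
        constructor
        · rintro ⟨_, _, hw⟩
          exact hw
        · intro hw
          exact ⟨Finset.ne_empty_of_mem (mem_accSet.2 ⟨hi, hw⟩), hi, hw⟩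
      rw [hset, kap_acc_inter hprob i hs]
    have e2 : ∑ T ∈ (S.powerset.filter (· ≠ ∅)).filter (fun T => ¬ i ∈ T), f T =
        kap μ (ES μ S ∩ (Acc μ i)ᶜ) * μ i s := by
      rw [Finset.sum_congr rfl (fun T hT => hterm2 T (Finset.mem_of_mem_filter T hT)
        (Finset.mem_filter.1 hT).2), ← Finset.sum_mul, Finset.filter_filter]
      have := sum_kap_piece hprob S (fun T => T ≠ ∅ ∧ ¬ i ∈ T)
        (MeasurableSet.univ (α := Ω × ℝ))
      simp only [Set.inter_univ] at this
      rw [this]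
      have hset : {w : Ω × ℝ | accSet μ S w ≠ ∅ ∧ ¬ i ∈ accSet μ S w} =
          ES μ S ∩ (Acc μ i)ᶜ := by
        ext w
        simp only [Set.mem_setOf_eq, accSet_ne_empty, mem_accSet, Set.mem_inter_iff,
          Set.mem_compl_iff]
        tauto
      rw [hset]
    have hdecomp : kap μ (ES μ S) =
        (Fintype.card ι : ℝ≥0∞)⁻¹ + kap μ (ES μ S ∩ (Acc μ i)ᶜ) := by
      have hsub : Acc μ i ⊆ ES μ S := Set.subset_biUnion_of_mem hi
      have h0 := measure_inter_add_diff (μ := kap μ) (ES μ S) (acc_meas (μ := μ) i)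
      rw [Set.inter_eq_self_of_subset_right hsub, Set.diff_eq, kap_acc hprob i] at h0
      exact h0.symm
    rw [e1, e2, ← add_mul, ← hdecomp, ← mul_assoc, ENNReal.inv_mul_cancel hc0 hc1, one_mul]

/-- The recursive measure couples each pair near-optimally. -/
lemma gamAux_pair [StandardBorelSpace Ω] (hprob : ∀ i, IsProbabilityMeasure (μ i))
    (hΩ : Nonempty Ω) :
    ∀ k, ∀ S : Finset ι, S.card ≤ k → ∀ i ∈ S, ∀ j ∈ S,
      kap μ (Acc μ i ∩ Acc μ j) / kap μ (Acc μ i ∪ Acc μ j) ≤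
        gamAux μ k S {ω : ι → Ω | ω i = ω j} := by
  classical
  intro k
  induction k with
  | zero =>
    intro S hcard i hi j hj
    rw [Finset.card_eq_zero.1 (Nat.le_zero.1 hcard)] at hi
    exact absurd hi (Finset.notMem_empty i)
  | succ k ih =>
    intro S hcard i hi j hj
    have hD : MeasurableSet {ω : ι → Ω | ω i = ω j} := by
      letI := upgradeStandardBorel Ω
      exact StronglyMeasurable.measurableSet_eq_fun
        (measurable_pi_apply i).stronglyMeasurable (measurable_pi_apply j).stronglyMeasurable
    have hS : S ≠ ∅ := Finset.ne_empty_of_mem hi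
    haveI := kap_prob hprob
    have hc0 := kap_es_ne_zero hprob (Finset.nonempty_of_ne_empty hS)
    have hc1 := kap_es_ne_top hprob S
    set b := kap μ (Acc μ i ∩ Acc μ j) with hb
    set m := kap μ (Acc μ i ∪ Acc μ j) with hm
    have hm0 : m ≠ 0 := by
      intro h
      have h1 : kap μ (Acc μ i) ≤ m := measure_mono Set.subset_union_left
      rw [kap_acc hprob i, h] at h1
      simp only [le_zero_iff, ENNReal.inv_eq_zero] at h1
      exact ENNReal.natCast_ne_top _ h1
    have hm1 : m ≠ ⊤ := (measure_lt_top _ _).ne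
    have hgam : gamAux μ (k+1) S = (kap μ (ES μ S))⁻¹ •
        ∑ T ∈ S.powerset.filter (· ≠ ∅),
          (((kap μ).restrict (piece μ S T)).prod (gamAux μ k (S \ T))).map (paste T) := by
      simp [gamAux, hS]
    rw [hgam, Measure.smul_apply, Measure.finset_sum_apply, smul_eq_mul]
    set f : Finset ι → ℝ≥0∞ := fun T =>
      ((((kap μ).restrict (piece μ S T)).prod (gamAux μ k (S \ T))).map (paste T))
        {ω : ι → Ω | ω i = ω j} with hf
    have hcardT : ∀ T ∈ S.powerset.filter (· ≠ ∅), (S \ T).card ≤ k := by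
      intro T hT
      simp only [Finset.mem_filter, Finset.mem_powerset] at hT
      have : (S \ T).card < S.card := Finset.card_lt_card
        (Finset.sdiff_ssubset hT.1 (Finset.nonempty_of_ne_empty hT.2))
      omega
    set 𝒯 := S.powerset.filter (· ≠ ∅) with h𝒯
    set 𝒯b := 𝒯.filter (fun T => i ∈ T ∧ j ∈ T) with h𝒯b
    set 𝒯n := 𝒯.filter (fun T => i ∉ T ∧ j ∉ T) with h𝒯n
    have e1 : ∑ T ∈ 𝒯b, f T = b := by
      have hterm : ∀ T ∈ 𝒯b, f T = kap μ (piece μ S T) := by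
        intro T hT
        obtain ⟨hT𝒯, hiT, hjT⟩ : T ∈ 𝒯 ∧ i ∈ T ∧ j ∈ T := by
          have := Finset.mem_filter.1 hT
          exact ⟨this.1, this.2⟩
        haveI := gamAux_prob hprob hΩ k (S \ T) (hcardT T hT𝒯)
        have hpre : paste T ⁻¹' {ω : ι → Ω | ω i = ω j} = Set.univ := by
          ext p
          simp [paste, hiT, hjT]
        rw [hf]
        simp only
        rw [Measure.map_apply (paste_meas T) hD, hpre, ← Set.univ_prod_univ,
          Measure.prod_prod, Measure.restrict_apply_univ, measure_univ, mul_one]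
      rw [Finset.sum_congr rfl hterm, h𝒯b, h𝒯, Finset.filter_filter]
      have hsum := sum_kap_piece hprob S (fun T => T ≠ ∅ ∧ (i ∈ T ∧ j ∈ T))
        (MeasurableSet.univ (α := Ω × ℝ))
      simp only [Set.inter_univ] at hsum
      rw [hsum]
      congr 1
      ext w
      simp only [Set.mem_setOf_eq, mem_accSet, Set.mem_inter_iff]
      constructor
      · rintro ⟨_, ⟨_, hwi⟩, ⟨_, hwj⟩⟩
        exact ⟨hwi, hwj⟩
      · rintro ⟨hwi, hwj⟩
        exact ⟨Finset.ne_empty_of_mem (mem_accSet.2 ⟨hi, hwi⟩), ⟨hi, hwi⟩, ⟨hj, hwj⟩⟩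
    have e2 : kap μ (ES μ S ∩ ((Acc μ i)ᶜ ∩ (Acc μ j)ᶜ)) * (b / m) ≤ ∑ T ∈ 𝒯n, f T := by
      have hterm : ∀ T ∈ 𝒯n, kap μ (piece μ S T) * (b / m) ≤ f T := by
        intro T hT
        obtain ⟨hT𝒯, hiT, hjT⟩ : T ∈ 𝒯 ∧ i ∉ T ∧ j ∉ T := by
          have := Finset.mem_filter.1 hT
          exact ⟨this.1, this.2⟩
        haveI := gamAux_prob hprob hΩ k (S \ T) (hcardT T hT𝒯)
        have hpre : paste T ⁻¹' {ω : ι → Ω | ω i = ω j} =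
            (Set.univ : Set (Ω × ℝ)) ×ˢ {ω : ι → Ω | ω i = ω j} := by
          ext p
          simp [paste, hiT, hjT]
        rw [hf]
        simp only
        rw [Measure.map_apply (paste_meas T) hD, hpre, Measure.prod_prod,
          Measure.restrict_apply_univ]
        refine mul_le_mul_right ?_ _
        exact ih (S \ T) (hcardT T hT𝒯) i (Finset.mem_sdiff.2 ⟨hi, hiT⟩)
          j (Finset.mem_sdiff.2 ⟨hj, hjT⟩)
      refine le_trans ?_ (Finset.sum_le_sum hterm)
      rw [← Finset.sum_mul]
      refine mul_le_mul_left (le_of_eq ?_) _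
      rw [h𝒯n, h𝒯, Finset.filter_filter]
      have hsum := sum_kap_piece hprob S (fun T => T ≠ ∅ ∧ (i ∉ T ∧ j ∉ T))
        (MeasurableSet.univ (α := Ω × ℝ))
      simp only [Set.inter_univ] at hsum
      rw [hsum]
      congr 1
      ext w
      simp only [Set.mem_setOf_eq, accSet_ne_empty, mem_accSet, Set.mem_inter_iff,
        Set.mem_compl_iff]
      tauto
    have hdecomp : kap μ (ES μ S) =
        m + kap μ (ES μ S ∩ ((Acc μ i)ᶜ ∩ (Acc μ j)ᶜ)) := by
      have hsub : Acc μ i ∪ Acc μ j ⊆ ES μ S :=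
        Set.union_subset (Set.subset_biUnion_of_mem hi) (Set.subset_biUnion_of_mem hj)
      have h0 := measure_inter_add_diff (μ := kap μ) (ES μ S)
        ((acc_meas (μ := μ) i).union (acc_meas (μ := μ) j))
      rw [Set.inter_eq_self_of_subset_right hsub, Set.diff_eq, Set.compl_union] at h0
      rw [← h0, hm]
    have hsplit : ∑ T ∈ 𝒯b, f T + ∑ T ∈ 𝒯n, f T ≤ ∑ T ∈ 𝒯, f T := by
      have hdisj : Disjoint 𝒯b 𝒯n := by
        refine Finset.disjoint_left.2 fun T hT hT' => ?_
        have h1 := (Finset.mem_filter.1 hT).2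
        have h2 := (Finset.mem_filter.1 hT').2
        exact h2.1 h1.1
      rw [← Finset.sum_union hdisj]
      refine Finset.sum_le_sum_of_subset ?_
      refine Finset.union_subset (Finset.filter_subset _ _) (Finset.filter_subset _ _)
    have hkey : kap μ (ES μ S) * (b / m) ≤ ∑ T ∈ 𝒯, f T := by
      rw [hdecomp, add_mul]
      have hmb : m * (b / m) = b := by
        rw [mul_comm]
        exact ENNReal.div_mul_cancel hm0 hm1
      rw [hmb]
      exact le_trans (add_le_add le_rfl e2) (by rw [← e1]; exact hsplit)
    calc b / m = (kap μ (ES μ S))⁻¹ * (kap μ (ES μ S) * (b / m)) := by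
          rw [← mul_assoc, ENNReal.inv_mul_cancel hc0 hc1, one_mul]
      _ ≤ (kap μ (ES μ S))⁻¹ * ∑ T ∈ 𝒯, f T := mul_le_mul_right hkey _

/-- The overlap integral of two densities. -/
noncomputable def beta (μ : ι → Measure Ω) (i j : ι) : ℝ≥0∞ :=
  ∫⁻ z, min (g μ i z) (g μ j z) ∂(sig μ)

lemma beta_le_one (hprob : ∀ i, IsProbabilityMeasure (μ i)) (i j : ι) : beta μ i j ≤ 1 := by
  calc beta μ i j ≤ ∫⁻ z, g μ i z ∂(sig μ) := lintegral_mono fun z => min_le_left _ _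
    _ = 1 := by rw [lintegral_g hprob i, (hprob i).measure_univ]

lemma beta_ne_top (hprob : ∀ i, IsProbabilityMeasure (μ i)) (i j : ι) : beta μ i j ≠ ⊤ :=
  ((beta_le_one hprob i j).trans_lt one_lt_top).ne

lemma beta_comm (i j : ι) : beta μ i j = beta μ j i := by
  unfold beta
  exact lintegral_congr fun z => min_comm _ _

lemma kap_acc_inter_acc (hprob : ∀ i, IsProbabilityMeasure (μ i)) (i j : ι) :
    kap μ (Acc μ i ∩ Acc μ j) = ((Fintype.card ι : ℝ≥0∞))⁻¹ * beta μ i j := by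
  have hset : Acc μ i ∩ Acc μ j =
      {w : Ω × ℝ | ENNReal.ofReal w.2 < min (g μ i w.1) (g μ j w.1)} ∩
        (Prod.fst ⁻¹' (Set.univ : Set Ω)) := by
    ext w
    simp [Acc, lt_min_iff]
  rw [hset, kap_inter hprob ((g_meas i).min (g_meas j)) MeasurableSet.univ]
  congr 1
  rw [Measure.restrict_univ]
  refine lintegral_congr_ae ?_
  filter_upwards [g_le_one hprob i] with z hz
  exact min_eq_left (le_trans (min_le_left _ _) hz)

lemma kap_acc_union_acc (hprob : ∀ i, IsProbabilityMeasure (μ i)) (i j : ι) :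
    kap μ (Acc μ i ∪ Acc μ j) = ((Fintype.card ι : ℝ≥0∞))⁻¹ * (2 - beta μ i j) := by
  have hset : Acc μ i ∪ Acc μ j =
      {w : Ω × ℝ | ENNReal.ofReal w.2 < max (g μ i w.1) (g μ j w.1)} ∩
        (Prod.fst ⁻¹' (Set.univ : Set Ω)) := by
    ext w
    simp [Acc, lt_max_iff]
  rw [hset, kap_inter hprob ((g_meas i).max (g_meas j)) MeasurableSet.univ]
  congr 1
  rw [Measure.restrict_univ]
  have h1 : ∫⁻ z, min (max (g μ i z) (g μ j z)) 1 ∂(sig μ) =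
      ∫⁻ z, max (g μ i z) (g μ j z) ∂(sig μ) := by
    refine lintegral_congr_ae ?_
    filter_upwards [g_le_one hprob i, g_le_one hprob j] with z hzi hzj
    exact min_eq_left (max_le hzi hzj)
  rw [h1]
  have h2 : ∫⁻ z, max (g μ i z) (g μ j z) ∂(sig μ) + beta μ i j = 2 := by
    rw [beta, ← lintegral_add_left (((g_meas (μ := μ) i).max (g_meas j)))]
    have : ∀ z, max (g μ i z) (g μ j z) + min (g μ i z) (g μ j z) = g μ i z + g μ j z :=
      fun z => max_add_min _ _
    rw [lintegral_congr this, lintegral_add_left (g_meas (μ := μ) i), lintegral_g hprob i,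
      lintegral_g hprob j, (hprob i).measure_univ, (hprob j).measure_univ]
    norm_num
  exact ENNReal.eq_sub_of_add_eq (beta_ne_top hprob i j) h2

/-- One-sided total variation bound. -/
lemma tv_one_sided (hprob : ∀ i, IsProbabilityMeasure (μ i)) (i j : ι)
    {s : Set Ω} (hs : MeasurableSet s) :
    (μ i s).toReal - (μ j s).toReal ≤ 1 - (beta μ i j).toReal := by
  haveI := fun i => hprob i
  have key : μ i s + beta μ i j ≤ 1 + μ j s := by
    have hβ : beta μ i j = ∫⁻ z in s, min (g μ i z) (g μ j z) ∂(sig μ) +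
        ∫⁻ z in sᶜ, min (g μ i z) (g μ j z) ∂(sig μ) :=
      (lintegral_add_compl _ hs).symm
    have h1 : ∫⁻ z in s, min (g μ i z) (g μ j z) ∂(sig μ) ≤ μ j s := by
      rw [← setLIntegral_g hprob j hs]
      exact lintegral_mono fun z => min_le_right _ _
    have h2 : ∫⁻ z in sᶜ, min (g μ i z) (g μ j z) ∂(sig μ) ≤
        ∫⁻ z in sᶜ, g μ i z ∂(sig μ) :=
      lintegral_mono fun z => min_le_left _ _
    calc μ i s + beta μ i j ≤ μ i s + (μ j s + ∫⁻ z in sᶜ, g μ i z ∂(sig μ)) := by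
          rw [hβ]
          exact add_le_add le_rfl (add_le_add h1 h2)
      _ = (∫⁻ z in s, g μ i z ∂(sig μ) + ∫⁻ z in sᶜ, g μ i z ∂(sig μ)) + μ j s := by
          rw [setLIntegral_g hprob i hs]; ring
      _ = 1 + μ j s := by
          rw [lintegral_add_compl _ hs, lintegral_g hprob i, (hprob i).measure_univ]
  have hfin : (1 : ℝ≥0∞) + μ j s ≠ ⊤ := by
    exact (ENNReal.add_lt_top.2 ⟨one_lt_top, measure_lt_top _ _⟩).ne
  have := ENNReal.toReal_mono hfin key
  rw [ENNReal.toReal_add (measure_ne_top _ _) (beta_ne_top hprob i j),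
    ENNReal.toReal_add one_ne_top (measure_ne_top _ _), ENNReal.toReal_one] at this
  linarith

/-- The total variation distance in terms of the overlap. -/
lemma tv_eq (hprob : ∀ i, IsProbabilityMeasure (μ i)) (i j : ι) :
    tvDist (μ i) (μ j) = 1 - (beta μ i j).toReal := by
  have habs : ∀ S : {S : Set Ω // MeasurableSet S},
      |(μ i S.1).toReal - (μ j S.1).toReal| ≤ 1 - (beta μ i j).toReal := by
    intro S
    rw [abs_le]
    constructor
    · have := tv_one_sided hprob j i S.2
      rw [beta_comm j i] at this
      linarith
    · exact tv_one_sided hprob i j S.2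
  have hbdd : BddAbove (Set.range fun S : {S : Set Ω // MeasurableSet S} =>
      |(μ i S.1).toReal - (μ j S.1).toReal|) := by
    refine ⟨1 - (beta μ i j).toReal, ?_⟩
    rintro x ⟨S, rfl⟩
    exact habs S
  refine le_antisymm (ciSup_le habs) ?_
  set s₀ : Set Ω := {z | g μ j z < g μ i z} with hs₀def
  have hs₀ : MeasurableSet s₀ := measurableSet_lt (g_meas j) (g_meas i)
  have hkey : μ i s₀ + beta μ i j = 1 + μ j s₀ := by
    have hβ : beta μ i j = ∫⁻ z in s₀, min (g μ i z) (g μ j z) ∂(sig μ) +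
        ∫⁻ z in s₀ᶜ, min (g μ i z) (g μ j z) ∂(sig μ) :=
      (lintegral_add_compl _ hs₀).symm
    have h1 : ∫⁻ z in s₀, min (g μ i z) (g μ j z) ∂(sig μ) = μ j s₀ := by
      rw [← setLIntegral_g hprob j hs₀]
      refine setLIntegral_congr_fun hs₀ (fun z hz => ?_)
      exact min_eq_right (le_of_lt hz)
    have h2 : ∫⁻ z in s₀ᶜ, min (g μ i z) (g μ j z) ∂(sig μ) =
        ∫⁻ z in s₀ᶜ, g μ i z ∂(sig μ) := by
      refine setLIntegral_congr_fun hs₀.compl (fun z hz => ?_)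
      exact min_eq_left (not_lt.1 hz)
    calc μ i s₀ + beta μ i j
        = μ i s₀ + (μ j s₀ + ∫⁻ z in s₀ᶜ, g μ i z ∂(sig μ)) := by rw [hβ, h1, h2]
      _ = (∫⁻ z in s₀, g μ i z ∂(sig μ) + ∫⁻ z in s₀ᶜ, g μ i z ∂(sig μ)) + μ j s₀ := by
          rw [setLIntegral_g hprob i hs₀]; ring
      _ = 1 + μ j s₀ := by
          rw [lintegral_add_compl _ hs₀, lintegral_g hprob i, (hprob i).measure_univ]
  have hval : (μ i s₀).toReal - (μ j s₀).toReal = 1 - (beta μ i j).toReal := by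
    haveI := hprob i
    haveI := hprob j
    have := congrArg ENNReal.toReal hkey
    rw [ENNReal.toReal_add (measure_ne_top _ _) (beta_ne_top hprob i j),
      ENNReal.toReal_add one_ne_top (measure_ne_top _ _), ENNReal.toReal_one] at this
    linarith
  refine le_ciSup_of_le hbdd ⟨s₀, hs₀⟩ ?_
  rw [hval] at *
  have hβ1 : (beta μ i j).toReal ≤ 1 := by
    have := ENNReal.toReal_mono one_ne_top (beta_le_one hprob i j)
    simpa using this
  rw [hval, abs_of_nonneg (by linarith)]

end Lemmas

end POC

open scoped ENNReal

/-- Pairwise near-optimal coupling: for a finite nonempty family of probability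
measures `(μ i)` on a standard Borel space, there is a single probability measure
`Γ` on the product space whose `i`-th marginal is `μ i` for every `i`, and such
that for every pair `i, j` the coordinates disagree with probability at most
`2 d_TV(μ i, μ j) / (1 + d_TV(μ i, μ j))`. -/
theorem pairwise_optimal_coupling {ι Ω : Type*} [Fintype ι] [Nonempty ι]
    [MeasurableSpace Ω] [StandardBorelSpace Ω]
    (μ : ι → Measure Ω) (hprob : ∀ i, IsProbabilityMeasure (μ i)) :
    ∃ Γ : Measure (ι → Ω), IsProbabilityMeasure Γ ∧
      (∀ i : ι, Γ.map (fun ω => ω i) = μ i) ∧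
      ∀ i j : ι,
        (Γ {ω : ι → Ω | ω i ≠ ω j}).toReal ≤
          2 * tvDist (μ i) (μ j) / (1 + tvDist (μ i) (μ j)) := by
  classical
  haveI hΩ : Nonempty Ω := by
    by_contra h
    rw [not_nonempty_iff] at h
    have h1 := (hprob (Classical.arbitrary ι)).measure_univ
    rw [Set.univ_eq_empty_iff.2 h, measure_empty] at h1
    exact zero_ne_one h1
  have hcard : (Finset.univ : Finset ι).card ≤ Fintype.card ι := by simp
  refine ⟨POC.gamAux μ (Fintype.card ι) Finset.univ, POC.gamAux_prob hprob hΩ _ _ hcard,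
    fun i => POC.gamAux_marginal hprob hΩ _ _ hcard i (Finset.mem_univ i), fun i j => ?_⟩
  set Γ := POC.gamAux μ (Fintype.card ι) Finset.univ with hΓdef
  haveI hΓprob : IsProbabilityMeasure Γ := POC.gamAux_prob hprob hΩ _ _ hcard
  have hD : MeasurableSet {ω : ι → Ω | ω i = ω j} := by
    letI := upgradeStandardBorel Ω
    exact StronglyMeasurable.measurableSet_eq_fun
      (measurable_pi_apply i).stronglyMeasurable (measurable_pi_apply j).stronglyMeasurable
  have hpair := POC.gamAux_pair hprob hΩ (Fintype.card ι) Finset.univ hcard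
    i (Finset.mem_univ i) j (Finset.mem_univ j)
  set β := POC.beta μ i j with hβdef
  have hβ1 : β ≤ 1 := POC.beta_le_one hprob i j
  have hn0 : ((Fintype.card ι : ℝ≥0∞))⁻¹ ≠ 0 :=
    ENNReal.inv_ne_zero.2 (ENNReal.natCast_ne_top _)
  have hn1 : ((Fintype.card ι : ℝ≥0∞))⁻¹ ≠ ⊤ :=
    ENNReal.inv_ne_top.2 (Nat.cast_ne_zero.2 Fintype.card_ne_zero)
  have hr : POC.kap μ (POC.Acc μ i ∩ POC.Acc μ j) / POC.kap μ (POC.Acc μ i ∪ POC.Acc μ j) =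
      β / (2 - β) := by
    rw [POC.kap_acc_inter_acc hprob i j, POC.kap_acc_union_acc hprob i j,
      ENNReal.mul_div_mul_left _ _ hn0 hn1]
  rw [hr] at hpair
  have hne : {ω : ι → Ω | ω i ≠ ω j} = {ω : ι → Ω | ω i = ω j}ᶜ := rfl
  rw [hne, prob_compl_eq_one_sub hD]
  have h2βge : (1 : ℝ≥0∞) ≤ 2 - β := by
    refine ENNReal.le_sub_of_add_le_left (ne_top_of_le_ne_top ENNReal.one_ne_top hβ1) ?_
    calc β + 1 ≤ 1 + 1 := add_le_add hβ1 le_rfl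
      _ = 2 := by norm_num
  have h2β0 : (2 : ℝ≥0∞) - β ≠ 0 := (lt_of_lt_of_le zero_lt_one h2βge).ne'
  have h2β1 : (2 : ℝ≥0∞) - β ≠ ⊤ :=
    (lt_of_le_of_lt tsub_le_self (by norm_num : (2:ℝ≥0∞) < ⊤)).ne
  have hr1 : β / (2 - β) ≤ 1 := by
    rw [ENNReal.div_le_iff h2β0 h2β1, one_mul]
    exact le_trans hβ1 h2βge
  have hmono : (1 : ℝ≥0∞) - Γ {ω : ι → Ω | ω i = ω j} ≤ 1 - β / (2 - β) :=
    tsub_le_tsub_left hpair 1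
  have hfin : (1 : ℝ≥0∞) - β / (2 - β) ≠ ⊤ :=
    (lt_of_le_of_lt tsub_le_self ENNReal.one_lt_top).ne
  have hstep := ENNReal.toReal_mono hfin hmono
  refine le_trans hstep ?_
  have hβr1 : β.toReal ≤ 1 := by
    have := ENNReal.toReal_mono ENNReal.one_ne_top hβ1
    simpa using this
  have hβr0 : 0 ≤ β.toReal := ENNReal.toReal_nonneg
  have htr : ((1 : ℝ≥0∞) - β / (2 - β)).toReal = 1 - β.toReal / (2 - β.toReal) := by
    rw [ENNReal.toReal_sub_of_le hr1 ENNReal.one_ne_top, ENNReal.toReal_one, ENNReal.toReal_div,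
      ENNReal.toReal_sub_of_le (le_trans hβ1 one_le_two) (by norm_num)]
    norm_num
  rw [htr, POC.tv_eq hprob i j, ← hβdef]
  have h2r : (2 : ℝ) - β.toReal ≠ 0 := by linarith
  have : 1 + (1 - β.toReal) = 2 - β.toReal := by ring
  rw [this]
  have heq : 1 - β.toReal / (2 - β.toReal) = 2 * (1 - β.toReal) / (2 - β.toReal) := by
    field_simp
    ring
  rw [heq]
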